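/- Let K be an infinite field and A a finite-dimensional commutative étale K-algebra (i.e., A is a finite product of finite separable field extensions of K; equivalently A is finite-dimensional and formally étale over K). Then there exists t ∈ A such that A is generated by t as a K-algebra, i.e., Algebra.adjoin K {t} = A. -/

import Mathlib

universe u

open Algebra Polynomial Module

/-- Over an infinite field `K`, every finite-dimensional commutative étale
(i.e. formally étale) `K`-algebra is monogenic: it is generated by a single element
as a `K`-algebra. -/
theorem stmt_5 (K A : Type u) [Field K] [Infinite K]
    [CommRing A] [Algebra K A] [FiniteDimensional K A]
    [Algebra.FormallyEtale K A] :
    ∃ t : A, Algebra.adjoin K {t} = ⊤ := by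
  classical
  cases subsingleton_or_nontrivial A with
  | inl h => exact ⟨0, Subsingleton.elim _ _⟩
  | inr h =>
  have hred : IsReduced A := Algebra.FormallyUnramified.isReduced_of_field K A
  have hart : IsArtinianRing A := isArtinian_of_tower K inferInstance
  set F := AlgebraicClosure K with hF
  set n := Module.finrank K A with hn
  -- the index set of maximal ideals
  haveI : Finite {I : Ideal A | I.IsMaximal} := (IsArtinianRing.setOfPred_isMaximal_finite A).to_subtype
  haveI : Fintype {I : Ideal A | I.IsMaximal} := Fintype.ofFinite _
  haveI : ∀ I : {I : Ideal A | I.IsMaximal}, I.1.IsMaximal := fun I => I.2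
  letI : ∀ I : {I : Ideal A | I.IsMaximal}, Field (A ⧸ I.1) :=
    fun I => Ideal.Quotient.field I.1
  haveI : ∀ I : {I : Ideal A | I.IsMaximal}, Module.Finite K (A ⧸ I.1) := fun I =>
    Module.Finite.of_surjective (Ideal.Quotient.mkₐ K I.1).toLinearMap
      (Ideal.Quotient.mk_surjective)
  haveI : ∀ I : {I : Ideal A | I.IsMaximal}, Algebra.IsSeparable K (A ⧸ I.1) := by
    intro I
    haveI : Algebra.FormallyUnramified K (A ⧸ I.1) :=
      Algebra.FormallyUnramified.of_surjective (Ideal.Quotient.mkₐ K I.1)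
        Ideal.Quotient.mk_surjective
    exact Algebra.FormallyUnramified.isSeparable K (A ⧸ I.1)
  -- The pi-type algebra equivalence
  let ψ : A →ₐ[K] ((I : {I : Ideal A | I.IsMaximal}) → A ⧸ I.1) :=
    Pi.algHom _ _ (fun I => Ideal.Quotient.mkₐ K I.1)
  have hψ : Function.Bijective ψ := by
    constructor
    · intro x y hxy
      apply (IsArtinianRing.equivPi A).injective
      funext m
      exact congr_fun hxy ⟨m.asIdeal, m.isMaximal⟩
    · intro g
      obtain ⟨x, hx⟩ := (IsArtinianRing.equivPi A).surjective
        (fun m : MaximalSpectrum A => g ⟨m.asIdeal, m.isMaximal⟩)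
      refine ⟨x, ?_⟩
      funext I
      exact congr_fun hx ⟨I.1, I.2⟩
  let e : A ≃ₐ[K] ((I : {I : Ideal A | I.IsMaximal}) → A ⧸ I.1) :=
    AlgEquiv.ofBijective ψ hψ
  -- counting
  let S := (I : {I : Ideal A | I.IsMaximal}) × ((A ⧸ I.1) →ₐ[K] F)
  have hcardS : Fintype.card S = n := by
    show Fintype.card ((I : {I : Ideal A | I.IsMaximal}) × ((A ⧸ I.1) →ₐ[K] F)) = n
    rw [Fintype.card_sigma]
    have : n = Module.finrank K ((I : {I : Ideal A | I.IsMaximal}) → A ⧸ I.1) :=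
      e.toLinearEquiv.finrank_eq
    rw [this, Module.finrank_pi_fintype]
    exact Finset.sum_congr rfl fun I _ => AlgHom.card K (A ⧸ I.1) F
  -- the family of characters
  let Φ : S → (A →ₐ[K] F) := fun s => s.2.comp (Ideal.Quotient.mkₐ K s.1.1)
  have hΦinj : Function.Injective Φ := by
    rintro ⟨I, τ⟩ ⟨J, υ⟩ hIJ
    have hker : ∀ (I : {I : Ideal A | I.IsMaximal}) (τ : (A ⧸ I.1) →ₐ[K] F),
        RingHom.ker (Φ ⟨I, τ⟩) = I.1 := by
      intro I τ
      ext x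
      simp only [RingHom.mem_ker]
      constructor
      · intro hx
        have h2 : Ideal.Quotient.mk I.1 x = 0 := by
          apply RingHom.injective (τ.toRingHom : (A ⧸ I.1) →+* F)
          rw [map_zero]
          exact hx
        rwa [← Ideal.Quotient.eq_zero_iff_mem]
      · intro hx
        have h3 : Ideal.Quotient.mk I.1 x = 0 := Ideal.Quotient.eq_zero_iff_mem.mpr hx
        show τ (Ideal.Quotient.mk I.1 x) = 0
        rw [h3, map_zero]
    have hIJ' : I = J := by
      have := hker I τ
      rw [hIJ, hker J υ] at this
      exact Subtype.ext this.symm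
    subst hIJ'
    have hτυ : τ = υ := by
      apply AlgHom.ext
      intro x
      obtain ⟨a, rfl⟩ := Ideal.Quotient.mk_surjective (I := I.1) x
      exact congrArg (fun f => f a) hIJ
    rw [hτυ]
  -- find t where all characters differ
  obtain ⟨t, ht⟩ : ∃ t : A, ∀ p : {p : S × S // p.1 ≠ p.2}, Φ p.1.1 t ≠ Φ p.1.2 t := by
    by_contra hcon
    push_neg at hcon
    have hcover : ⋃ p : {p : S × S // p.1 ≠ p.2},
        ((LinearMap.ker ((Φ p.1.1).toLinearMap - (Φ p.1.2).toLinearMap) : Submodule K A) :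
          Set A) = Set.univ := by
      ext a
      simp only [Set.mem_iUnion, Set.mem_univ, iff_true]
      obtain ⟨p, hp⟩ := hcon a
      refine ⟨p, ?_⟩
      simp only [SetLike.mem_coe, LinearMap.mem_ker, LinearMap.sub_apply,
        AlgHom.toLinearMap_apply, sub_eq_zero]
      exact hp
    obtain ⟨p, hp⟩ := Subspace.exists_eq_top_of_iUnion_eq_univ hcover
    have : Φ p.1.1 = Φ p.1.2 := by
      apply AlgHom.ext
      intro a
      have : a ∈ LinearMap.ker ((Φ p.1.1).toLinearMap - (Φ p.1.2).toLinearMap) := by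
        rw [hp]; trivial
      simpa [sub_eq_zero] using this
    exact p.2 (hΦinj this)
  have htinj : Function.Injective (fun s : S => Φ s t) := by
    intro s s' hss
    by_contra hne
    exact ht ⟨(s, s'), hne⟩ hss
  -- linear independence of powers of t
  have hli : LinearIndependent K (fun i : Fin n => t ^ (i : ℕ)) := by
    rw [Fintype.linearIndependent_iff]
    intro g hg
    -- build the polynomial
    set p : K[X] := ∑ i : Fin n, Polynomial.C (g i) * Polynomial.X ^ (i : ℕ) with hp
    have haev : Polynomial.aeval t p = 0 := by
      rw [hp, map_sum]
      simpa [Algebra.smul_def] using hg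
    have hdeg : p.natDegree < n := by
      have hn1 : 1 ≤ n := Module.finrank_pos
      have : p.natDegree ≤ n - 1 := by
        apply Polynomial.natDegree_sum_le_of_forall_le
        intro i _
        refine le_trans (Polynomial.natDegree_C_mul_le _ _) ?_
        rw [Polynomial.natDegree_X_pow]
        omega
      omega
    have hmap : p.map (algebraMap K F) = 0 := by
      apply Polynomial.eq_zero_of_natDegree_lt_card_of_eval_eq_zero _ htinj
      · intro s
        have h5 : Φ s (Polynomial.aeval t p) = 0 := by rw [haev, map_zero]
        rw [← Polynomial.aeval_algHom_apply, Polynomial.aeval_def,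
          ← Polynomial.eval_map] at h5
        exact h5
      · rw [hcardS]
        exact lt_of_le_of_lt (Polynomial.natDegree_map_le) hdeg
    have hp0 : p = 0 := by
      rwa [Polynomial.map_eq_zero_iff (algebraMap K F).injective] at hmap
    intro i
    have : p.coeff (i : ℕ) = g i := by
      rw [hp, Polynomial.finset_sum_coeff]
      rw [Finset.sum_eq_single i]
      · simp
      · intro j _ hji
        simp only [Polynomial.coeff_C_mul, Polynomial.coeff_X_pow]
        rw [if_neg (by simpa [Fin.val_eq_val] using (Ne.symm hji)), mul_zero]
      · intro hi; exact absurd (Finset.mem_univ i) hi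
    rw [← this, hp0, Polynomial.coeff_zero]
  -- conclude
  refine ⟨t, ?_⟩
  have hspan : Submodule.span K (Set.range (fun i : Fin n => t ^ (i : ℕ))) ≤
      Subalgebra.toSubmodule (Algebra.adjoin K {t}) := by
    rw [Submodule.span_le]
    rintro _ ⟨i, rfl⟩
    exact Subalgebra.pow_mem _ (Algebra.subset_adjoin (Set.mem_singleton t)) _
  have hfr : Module.finrank K
      (Submodule.span K (Set.range (fun i : Fin n => t ^ (i : ℕ)))) = n := by
    rw [finrank_span_eq_card hli, Fintype.card_fin]
  have := Submodule.finrank_mono hspan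
  rw [hfr] at this
  have htop : Subalgebra.toSubmodule (Algebra.adjoin K {t}) = ⊤ := by
    apply Submodule.eq_top_of_finrank_eq
    exact le_antisymm (Submodule.finrank_le _) this
  rwa [Algebra.toSubmodule_eq_top] at htop
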